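/- Let H be the bipartite graph constructed from a directed graph G with edge lengths ℓ as follows: each vertex u of G has copies u_1 ∈ L and u_2 ∈ R; each arc (u,v) of G gives an edge (u_1, v_2) of weight -ℓ(u,v); each vertex u gives an edge (u_1, u_2) of weight 0. Then the maximum weight of a perfect matching in H is positive if and only if G contains a cycle of negative total length. -/

import Mathlib

open Equiv Equiv.Perm


lemma extract_simple {V : Type*} (E : V → V → Prop) (ℓ : V → V → ℤ) :
    ∀ k : ℕ, 0 < k → ∀ c : ℕ → V, (∀ i < k, E (c i) (c (i+1))) → c k = c 0 →
      (∑ i ∈ Finset.range k, ℓ (c i) (c (i+1))) < 0 →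
      ∃ k' : ℕ, ∃ c' : ℕ → V, 0 < k' ∧ (∀ i < k', E (c' i) (c' (i+1))) ∧ c' k' = c' 0 ∧
        (∑ i ∈ Finset.range k', ℓ (c' i) (c' (i+1))) < 0 ∧
        ∀ i < k', ∀ j < k', c' i = c' j → i = j := by
  intro k
  induction k using Nat.strong_induction_on with
  | _ k IH =>
    intro hk c hE hcl hsum
    by_cases hinj : ∀ i < k, ∀ j < k, c i = c j → i = j
    · exact ⟨k, c, hk, hE, hcl, hsum, hinj⟩
    · push_neg at hinj
      obtain ⟨a, ha, b, hb, hceq, hne⟩ := hinj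
      obtain ⟨i, j, hij, hj, hcij⟩ : ∃ i j, i < j ∧ j < k ∧ c i = c j := by
        rcases lt_or_gt_of_ne hne with h | h
        · exact ⟨a, b, h, hb, hceq⟩
        · exact ⟨b, a, h, ha, hceq.symm⟩
      have hi : i < k := hij.trans hj
      -- inner walk
      set e : ℕ → V := fun m => c (i + m) with he'
      have he : ∀ m, e m = c (i + m) := fun _ => rfl
      have hinner_sum : ∑ m ∈ Finset.range (j - i), ℓ (e m) (e (m + 1))
          = ∑ m ∈ Finset.Ico i j, ℓ (c m) (c (m + 1)) := by
        rw [Finset.sum_Ico_eq_sum_range]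
        exact Finset.sum_congr rfl fun m _ => rfl
      -- outer walk
      set d : ℕ → V := fun m => if m < i then c m else c (m + (j - i)) with hd
      have hdle : ∀ m ≤ i, d m = c m := by
        intro m hm
        rcases Nat.lt_or_ge m i with h | h
        · simp [hd, h]
        · have hm' : m = i := le_antisymm hm h
          have hji : m + (j - i) = j := by omega
          simp only [hd]
          rw [if_neg (by omega), hji, ← hcij, hm']
      have hdge : ∀ m, i ≤ m → d m = c (m + (j - i)) := by
        intro m hm
        rcases Nat.lt_or_ge m i with h | h
        · omega
        · simp [hd, Nat.not_lt.mpr h]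
      set k2 : ℕ := i + (k - j) with hk2
      have houter_sum : ∑ m ∈ Finset.range k2, ℓ (d m) (d (m + 1))
          = (∑ m ∈ Finset.range k, ℓ (c m) (c (m + 1)))
            - ∑ m ∈ Finset.Ico i j, ℓ (c m) (c (m + 1)) := by
        rw [hk2, Finset.sum_range_add]
        have h1 : ∀ m ∈ Finset.range i, ℓ (d m) (d (m+1)) = ℓ (c m) (c (m+1)) := by
          intro m hm
          rw [Finset.mem_range] at hm
          rw [hdle m (le_of_lt hm), hdle (m+1) hm]
        have h2 : ∀ m ∈ Finset.range (k - j), ℓ (d (i + m)) (d (i + m + 1))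
            = ℓ (c (j + m)) (c (j + m + 1)) := by
          intro m hm
          rw [hdge (i+m) (Nat.le_add_right _ _), hdge (i+m+1) (by omega)]
          congr 2 <;> omega
        rw [Finset.sum_congr rfl h1, Finset.sum_congr rfl h2]
        have hsplit : ∑ m ∈ Finset.range k, ℓ (c m) (c (m + 1))
            = (∑ m ∈ Finset.range j, ℓ (c m) (c (m+1)))
              + ∑ m ∈ Finset.range (k - j), ℓ (c (j + m)) (c (j + m + 1)) := by
          conv_lhs => rw [show k = j + (k - j) by omega]
          rw [Finset.sum_range_add]
        have hsplit2 : ∑ m ∈ Finset.range j, ℓ (c m) (c (m+1))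
            = (∑ m ∈ Finset.range i, ℓ (c m) (c (m+1)))
              + ∑ m ∈ Finset.Ico i j, ℓ (c m) (c (m + 1)) := by
          rw [Finset.range_eq_Ico, Finset.range_eq_Ico]
          exact (Finset.sum_Ico_consecutive (fun m => ℓ (c m) (c (m + 1))) (Nat.zero_le i) (le_of_lt hij)).symm
        rw [hsplit, hsplit2]; ring
      rcases lt_or_ge (∑ m ∈ Finset.Ico i j, ℓ (c m) (c (m + 1))) 0 with hneg | hpos
      · -- inner walk negative
        refine IH (j - i) (by omega) (by omega) e ?_ ?_ ?_
        · intro m hm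
          rw [he, he]
          exact hE (i + m) (by omega)
        · rw [he, he, show i + (j - i) = j by omega]
          simpa using hcij.symm
        · rw [hinner_sum]; exact hneg
      · -- outer walk negative
        refine IH k2 (by omega) (by omega) d ?_ ?_ ?_
        · intro m hm
          rcases Nat.lt_or_ge m i with h | h
          · rw [hdle m (le_of_lt h), hdle (m+1) h]
            exact hE m (by omega)
          · rw [hdge m h, hdge (m+1) (by omega)]
            have := hE (m + (j - i)) (by omega)
            convert this using 2 <;> omega
        · rw [hdge k2 (by omega), hdle 0 (Nat.zero_le _)]
          rw [show k2 + (j - i) = k by omega, hcl]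
        · rw [houter_sum]; omega


lemma neg_support_sum {V : Type*} [Fintype V] [DecidableEq V] (E : V → V → Prop) (ℓ : V → V → ℤ) :
    ∀ n : ℕ, ∀ σ : Equiv.Perm V, σ.support.card ≤ n →
      (∀ u ∈ σ.support, E u (σ u)) → (∑ u ∈ σ.support, ℓ u (σ u)) < 0 →
      ∃ (k : ℕ) (c : ℕ → V), 0 < k ∧ (∀ i < k, E (c i) (c (i + 1))) ∧ c k = c 0 ∧
        (∑ i ∈ Finset.range k, ℓ (c i) (c (i + 1))) < 0 := by
  intro n
  induction n with
  | zero =>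
    intro σ hcard _ hsum
    have : σ.support = ∅ := Finset.card_eq_zero.mp (Nat.le_zero.mp hcard)
    rw [this] at hsum
    simp at hsum
  | succ n IH =>
    intro σ hcard hE hsum
    obtain ⟨u, hu⟩ : ∃ u, u ∈ σ.support := by
      by_contra h
      push_neg at h
      have : σ.support = ∅ := Finset.eq_empty_of_forall_notMem h
      rw [this] at hsum; simp at hsum
    have huσ : σ u ≠ u := mem_support.mp hu
    set τ : Equiv.Perm V := σ.cycleOf u with hτ
    have hcyc : τ.IsCycle := isCycle_cycleOf σ huσ
    have hτsupp : τ.support ⊆ σ.support := support_cycleOf_le σ u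
    have huτ : u ∈ τ.support := by
      rw [hτ, mem_support_cycleOf_iff]
      exact ⟨SameCycle.refl _ _, hu⟩
    set m : ℕ := τ.support.card with hm
    have hm1 : 1 ≤ m := Finset.card_pos.mpr ⟨u, huτ⟩
    have horder : orderOf τ = m := hcyc.orderOf
    have hmem : ∀ i : ℕ, (σ ^ i) u ∈ τ.support := by
      intro i
      rw [hτ, mem_support_cycleOf_iff]
      exact ⟨⟨(i : ℤ), by simp [zpow_natCast]⟩, hu⟩
    have hclosed : (σ ^ m) u = u := by
      rw [← cycleOf_pow_apply_self σ u m, ← hτ, ← horder, pow_orderOf_eq_one, one_apply]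
    have hpowτ : ∀ i : ℕ, (τ ^ i) u = (σ ^ i) u := fun i => by
      rw [hτ]; exact cycleOf_pow_apply_self σ u i
    have hinjOn : ∀ i < m, ∀ j < m, (σ ^ i) u = (σ ^ j) u → i = j := by
      intro i hi j hj hijeq
      by_contra hne
      wlog hlt : i < j generalizing i j
      · exact this j hj i hi hijeq.symm (Ne.symm hne) (by omega)
      have h1 : (τ ^ j) u = (τ ^ i) u := by
        rw [hpowτ, hpowτ]; exact hijeq.symm
      have h2 : (τ ^ (j - i)) ((τ ^ i) u) = (τ ^ i) u := by
        rw [← Perm.mul_apply, ← pow_add, show j - i + i = j by omega]; exact h1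
      have hmem' : (τ ^ i) u ∈ τ.support := by rw [hpowτ]; exact hmem i
      have h4 : τ ^ (j - i) = 1 :=
        hcyc.pow_eq_one_iff.mpr ⟨(τ ^ i) u, mem_support.mp hmem', h2⟩
      have h5 : orderOf τ ∣ (j - i) := orderOf_dvd_of_pow_eq_one h4
      rw [horder] at h5
      have := Nat.le_of_dvd (by omega) h5
      omega
    have himage : Finset.image (fun i => (σ ^ i) u) (Finset.range m) = τ.support := by
      apply Finset.eq_of_subset_of_card_le
      · intro x hx
        obtain ⟨i, _, rfl⟩ := Finset.mem_image.mp hx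
        exact hmem i
      · rw [Finset.card_image_of_injOn, Finset.card_range]
        intro i hi j hj h
        exact hinjOn i (Finset.mem_range.mp hi) j (Finset.mem_range.mp hj) h
    have horbsum : ∑ i ∈ Finset.range m, ℓ ((σ ^ i) u) ((σ ^ (i+1)) u)
        = ∑ x ∈ τ.support, ℓ x (σ x) := by
      rw [← himage, Finset.sum_image (fun i hi j hj h =>
        hinjOn i (Finset.mem_range.mp hi) j (Finset.mem_range.mp hj) h)]
      refine Finset.sum_congr rfl fun i _ => ?_
      rw [pow_succ', Perm.mul_apply]
    rcases lt_or_ge (∑ x ∈ τ.support, ℓ x (σ x)) 0 with hneg | hpos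
    · refine ⟨m, fun i => (σ ^ i) u, hm1, ?_, ?_, ?_⟩
      · intro i _
        show E ((σ ^ i) u) ((σ ^ (i+1)) u)
        have := hE _ (hτsupp (hmem i))
        rw [pow_succ', Perm.mul_apply]
        exact this
      · simp [hclosed]
      · rw [horbsum]; exact hneg
    · set σ' : Equiv.Perm V := σ * τ⁻¹ with hσ'
      have h1 : ∀ x ∈ τ.support, σ' x = x := by
        intro x hx
        have hy : τ⁻¹ x ∈ τ.support := by
          rw [← support_inv]
          exact apply_mem_support.mpr (by rwa [support_inv])
        have hsc : σ.SameCycle u (τ⁻¹ x) := by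
          rw [hτ, mem_support_cycleOf_iff] at hy
          exact hy.1
        have hτy : τ (τ⁻¹ x) = σ (τ⁻¹ x) := by
          rw [hτ]; exact hsc.cycleOf_apply
        calc σ' x = σ (τ⁻¹ x) := Perm.mul_apply _ _ _
        _ = τ (τ⁻¹ x) := hτy.symm
        _ = x := Equiv.apply_symm_apply τ x
      have h2 : ∀ x ∉ τ.support, σ' x = σ x := by
        intro x hx
        have hτx : τ x = x := notMem_support.mp hx
        have : τ⁻¹ x = x := by
          nth_rewrite 1 [← hτx]
          exact τ.symm_apply_apply x
        calc σ' x = σ (τ⁻¹ x) := Perm.mul_apply _ _ _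
        _ = σ x := by rw [this]
      have hsupp' : σ'.support = σ.support \ τ.support := by
        ext x
        simp only [mem_support, Finset.mem_sdiff, not_not]
        by_cases hx : x ∈ τ.support
        · simp [h1 x hx, hx, mem_support.mp hx]
        · rw [h2 x hx]
          simp [mem_support, notMem_support.mp hx, hx]
      have hcard' : σ'.support.card ≤ n := by
        rw [hsupp', Finset.card_sdiff_of_subset hτsupp]
        omega
      have hsum' : (∑ x ∈ σ'.support, ℓ x (σ' x)) < 0 := by
        have heq : ∑ x ∈ σ'.support, ℓ x (σ' x)
            = ∑ x ∈ σ.support \ τ.support, ℓ x (σ x) := by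
          rw [hsupp']
          refine Finset.sum_congr rfl fun x hx => ?_
          rw [h2 x (Finset.mem_sdiff.mp hx).2]
        rw [heq, Finset.sum_sdiff_eq_sub hτsupp]
        omega
      have hE' : ∀ x ∈ σ'.support, E x (σ' x) := by
        intro x hx
        rw [hsupp', Finset.mem_sdiff] at hx
        rw [h2 x hx.2]
        exact hE x hx.1
      exact IH σ' hcard' hE' hsum'


/-- The maximum weight of a perfect matching in the bipartite graph `H` built from a
directed graph `G` is positive iff `G` has a negative cycle. -/
theorem matching_positive_iff_negative_cycle {V : Type*} [Fintype V] [DecidableEq V]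
    (E : V → V → Prop) [DecidableRel E] (ℓ : V → V → ℤ)
    (w : V → V → ℤ)
    (hw : ∀ u v, w u v =
      if u = v then (if E u v then max 0 (-ℓ u v) else 0) else -ℓ u v) :
    (∃ σ : Equiv.Perm V, (∀ u, σ u = u ∨ E u (σ u)) ∧ 0 < ∑ u : V, w u (σ u))
    ↔ ∃ (k : ℕ) (c : ℕ → V), 0 < k ∧ (∀ i < k, E (c i) (c (i + 1))) ∧ c k = c 0 ∧
        (∑ i ∈ Finset.range k, ℓ (c i) (c (i + 1))) < 0 := by
  have hwdiag : ∀ u : V, 0 ≤ w u u := by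
    intro u
    rw [hw, if_pos rfl]
    split
    · exact le_max_left _ _
    · exact le_refl 0
  constructor
  · rintro ⟨σ, hσE, hpos⟩
    by_cases hfix : ∃ u, σ u = u ∧ 0 < w u u
    · obtain ⟨u, hσu, hwu⟩ := hfix
      rw [hw u u, if_pos rfl] at hwu
      by_cases hEuu : E u u
      · rw [if_pos hEuu] at hwu
        have hℓ : ℓ u u < 0 := by
          rcases le_or_gt 0 (-ℓ u u) with h | h
          · by_contra h2
            push_neg at h2
            have : -ℓ u u ≤ 0 := by omega
            rw [max_eq_left this] at hwu
            omega
          · omega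
        exact ⟨1, fun _ => u, one_pos, fun i _ => hEuu, rfl, by simpa using hℓ⟩
      · rw [if_neg hEuu] at hwu
        exact absurd hwu (lt_irrefl 0)
    · push_neg at hfix
      have hc : ∀ u ∈ σ.supportᶜ, w u (σ u) ≤ 0 := by
        intro u hu
        have h : σ u = u := notMem_support.mp (Finset.mem_compl.mp hu)
        rw [h]
        exact hfix u h
      have hsuppos : 0 < ∑ u ∈ σ.support, w u (σ u) := by
        have h1 := Finset.sum_nonpos hc
        have h2 : ∑ u ∈ σ.support, w u (σ u) + ∑ u ∈ σ.supportᶜ, w u (σ u)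
            = ∑ u : V, w u (σ u) := Finset.sum_add_sum_compl _ _
        omega
      have hterm : ∀ u ∈ σ.support, w u (σ u) = -ℓ u (σ u) := by
        intro u hu
        rw [hw, if_neg (fun h => mem_support.mp hu h.symm)]
      have hsum2 : ∑ u ∈ σ.support, ℓ u (σ u) < 0 := by
        rw [Finset.sum_congr rfl hterm, Finset.sum_neg_distrib] at hsuppos
        omega
      exact neg_support_sum E ℓ σ.support.card σ le_rfl
        (fun u hu => (hσE u).resolve_left (mem_support.mp hu)) hsum2
  · rintro ⟨k, c, hk, hE, hcl, hsum⟩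
    obtain ⟨k', c', hk', hE', hcl', hsum', hinj'⟩ := extract_simple E ℓ k hk c hE hcl hsum
    rcases eq_or_lt_of_le (show 1 ≤ k' from hk') with h1 | h2
    · -- k' = 1 : self loop, use identity permutation
      have hk1 : k' = 1 := h1.symm
      subst hk1
      have hc10 : c' 1 = c' 0 := hcl'
      have hEloop : E (c' 0) (c' 0) := by
        have := hE' 0 (by omega)
        rwa [hc10] at this
      have hℓloop : ℓ (c' 0) (c' 0) < 0 := by
        have := hsum'
        rw [Finset.sum_range_one, hc10] at this
        exact this
      refine ⟨1, fun u => Or.inl rfl, ?_⟩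
      refine Finset.sum_pos' (fun u _ => by simpa using hwdiag u) ⟨c' 0, Finset.mem_univ _, ?_⟩
      show 0 < w (c' 0) (c' 0)
      rw [hw, if_pos rfl, if_pos hEloop]
      omega
    · -- k' ≥ 2 : use formPerm of the cycle list
      have hk2 : 2 ≤ k' := h2
      set l : List V := (List.range k').map c' with hl
      have hlen : l.length = k' := by simp [hl]
      have hnodup : l.Nodup := by
        refine List.Nodup.map_on ?_ List.nodup_range
        intro i hi j hj hij
        exact hinj' i (List.mem_range.mp hi) j (List.mem_range.mp hj) hij
      set σ : Equiv.Perm V := l.formPerm with hσ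
      have hkey : ∀ i < k', σ (c' i) = c' ((i + 1) % k') := by
        intro i hi
        have h0 : c' i = l[i]'(by rw [hlen]; exact hi) := by simp [hl]
        rw [hσ, h0, List.formPerm_apply_getElem l hnodup i (by rw [hlen]; exact hi)]
        simp [hl]
      have hmod : ∀ i < k', c' ((i + 1) % k') = c' (i + 1) := by
        intro i hi
        by_cases h : i + 1 < k'
        · rw [Nat.mod_eq_of_lt h]
        · have h3 : i + 1 = k' := by omega
          rw [h3, Nat.mod_self, ← hcl']
      have hne2 : ∀ i < k', c' i ≠ c' (i + 1) := by
        intro i hi h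
        by_cases h2' : i + 1 < k'
        · have := hinj' i hi (i + 1) h2' h
          omega
        · have h3 : i + 1 = k' := by omega
          rw [h3, hcl'] at h
          have := hinj' i hi 0 (by omega) h
          omega
      refine ⟨σ, ?_, ?_⟩
      · intro u
        by_cases hu : u ∈ l
        · obtain ⟨i, hi, rfl⟩ : ∃ i, i < k' ∧ c' i = u := by
            simpa [hl, List.mem_map, List.mem_range] using hu
          right
          rw [hkey i hi, hmod i hi]
          exact hE' i hi
        · left
          exact List.formPerm_apply_of_notMem hu
      · set S : Finset V := (Finset.range k').image c' with hS
        have hmemS : ∀ u, u ∈ S ↔ u ∈ l := by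
          intro u
          simp [hS, hl, Finset.mem_image, List.mem_map, List.mem_range]
        have hsplit : ∑ u ∈ S, w u (σ u) + ∑ u ∈ Sᶜ, w u (σ u)
            = ∑ u : V, w u (σ u) := Finset.sum_add_sum_compl _ _
        have hcompl : 0 ≤ ∑ u ∈ Sᶜ, w u (σ u) := by
          refine Finset.sum_nonneg fun u hu => ?_
          have hul : u ∉ l := fun h => (Finset.mem_compl.mp hu) ((hmemS u).mpr h)
          rw [List.formPerm_apply_of_notMem hul]
          exact hwdiag u
        have hSsum : ∑ u ∈ S, w u (σ u) = -∑ i ∈ Finset.range k', ℓ (c' i) (c' (i + 1)) := by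
          rw [hS, Finset.sum_image (fun i hi j hj h =>
            hinj' i (Finset.mem_range.mp hi) j (Finset.mem_range.mp hj) h)]
          rw [← Finset.sum_neg_distrib]
          refine Finset.sum_congr rfl fun i hi => ?_
          rw [Finset.mem_range] at hi
          rw [hkey i hi, hmod i hi, hw, if_neg (hne2 i hi)]
        have hSpos : 0 < ∑ u ∈ S, w u (σ u) := by rw [hSsum]; omega
        omega
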